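/- Let n ≥ 1. For any x_1 ∈ {1,...,n+1}, the number of permutations σ ∈ S_{n+1} with descent top set exactly {x_1} equals 2^{x_1 − 1} − 1. For any x_1 < x_2 in {1,...,n+1}, the number of permutations σ ∈ S_{n+1} with descent top set exactly {x_1, x_2} equals 3^{x_1−1}·2^{x_2−x_1} − (2^{x_1−1} + 2^{x_2−1}) + 1. -/

import Mathlib

/-- Descent top set of a permutation `σ` of `Fin (n+1)` (representing `{1,...,n+1}`):
`DT(σ) = {σ(i) : i ∈ {1,...,n}, σ(i) > σ(i+1)}`. -/
def descentTops (n : ℕ) (σ : Equiv.Perm (Fin (n + 1))) : Finset (Fin (n + 1)) :=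
  (Finset.univ.filter fun i : Fin n => σ i.succ < σ i.castSucc).image fun i => σ i.castSucc

namespace Stmt18aux

def dtl : List ℕ → Finset ℕ
  | [] => ∅
  | [_] => ∅
  | a :: b :: t => if b < a then insert a (dtl (b :: t)) else dtl (b :: t)

@[simp] lemma dtl_nil : dtl [] = ∅ := rfl
@[simp] lemma dtl_single (a : ℕ) : dtl [a] = ∅ := rfl
lemma dtl_cons_cons (a b : ℕ) (t : List ℕ) :
    dtl (a :: b :: t) = if b < a then insert a (dtl (b :: t)) else dtl (b :: t) := rfl

/-- prepending a strict lower bound doesn't change descent tops -/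
lemma dtl_cons_min (m : ℕ) (t : List ℕ) (h : ∀ a ∈ t, m < a) :
    dtl (m :: t) = dtl t := by
  cases t with
  | nil => rfl
  | cons b t =>
      rw [dtl_cons_cons, if_neg]
      exact Nat.not_lt.2 (h b (by simp)).le

lemma dtl_insertIdx (m : ℕ) : ∀ (l : List ℕ) (p : ℕ), (∀ a ∈ l, m < a) → p ≤ l.length →
    dtl (l.insertIdx p m) = if p = 0 then dtl l else insert (l.getD (p-1) 0) (dtl l) := by
  intro l
  induction l with
  | nil =>
      intro p _ hp
      have : p = 0 := Nat.le_zero.mp hp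
      subst this
      simp [List.insertIdx]
  | cons a t ih =>
      intro p hm hp
      match p with
      | 0 =>
          simp only [List.insertIdx, if_pos rfl]
          exact dtl_cons_min m (a :: t) hm
      | 1 =>
          have h1 : (a :: t).insertIdx 1 m = a :: m :: t := rfl
          rw [h1, dtl_cons_cons, if_pos (hm a (by simp)),
            dtl_cons_min m t (fun x hx => hm x (by simp [hx])), if_neg one_ne_zero]
          have hg : (a :: t).getD 0 0 = a := rfl
          rw [hg]
          cases t with
          | nil => rfl
          | cons b t' =>
              rw [dtl_cons_cons]
              split <;> simp [Finset.insert_idem]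
      | (q+2) =>
          have ht : t ≠ [] := by
            intro h; subst h; simp at hp
          obtain ⟨b, t', rfl⟩ := List.exists_cons_of_ne_nil ht
          have h1 : (a :: b :: t').insertIdx (q+2) m = a :: (b :: t').insertIdx (q+1) m := rfl
          have hb : ((b :: t').insertIdx (q+1) m).head? = some b := rfl
          rw [h1]
          have ih' := ih (q+1) (fun x hx => hm x (by simp [hx]))
            (by simp at hp ⊢; omega)
          -- head of insertIdx (q+1) m (b :: t') is b
          have h2 : (b :: t').insertIdx (q+1) m = b :: (t'.insertIdx q m) := rfl
          rw [h2, dtl_cons_cons, dtl_cons_cons]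
          rw [h2] at ih'
          rw [ih']
          simp only [Nat.add_sub_cancel] at *
          have hg : (a :: b :: t').getD (q + 2 - 1) 0 = (b :: t').getD q 0 := rfl
          rw [hg]
          split <;> simp [Finset.insert_comm]


lemma mem_dtl : ∀ (l : List ℕ) (v : ℕ), v ∈ dtl l ↔
    ∃ i, i + 1 < l.length ∧ l.getD (i+1) 0 < l.getD i 0 ∧ l.getD i 0 = v
  | [], v => by simp [dtl]
  | [a], v => by simp [dtl]
  | a :: b :: t, v => by
      have IH := mem_dtl (b :: t) v
      have shift : (∃ i, i + 1 < (a :: b :: t).length ∧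
            (a :: b :: t).getD (i+1) 0 < (a :: b :: t).getD i 0 ∧ (a :: b :: t).getD i 0 = v)
          ↔ ((b < a ∧ a = v) ∨ ∃ i, i + 1 < (b :: t).length ∧
            (b :: t).getD (i+1) 0 < (b :: t).getD i 0 ∧ (b :: t).getD i 0 = v) := by
        constructor
        · rintro ⟨i, h1, h2, h3⟩
          match i with
          | 0 => exact Or.inl ⟨by simpa using h2, by simpa using h3⟩
          | (j+1) =>
              refine Or.inr ⟨j, by simpa using h1, by simpa using h2, by simpa using h3⟩
        · rintro (⟨h1, h2⟩ | ⟨i, h1, h2, h3⟩)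
          · exact ⟨0, by simp, by simpa using h1, by simpa using h2⟩
          · exact ⟨i + 1, by simpa using h1, by simpa using h2, by simpa using h3⟩
      rw [dtl_cons_cons, shift, ← IH]
      split
      · rename_i h
        rw [Finset.mem_insert]
        constructor
        · rintro (rfl | hv)
          exacts [Or.inl ⟨h, rfl⟩, Or.inr hv]
        · rintro (⟨_, rfl⟩ | hv)
          exacts [Or.inl rfl, Or.inr hv]
      · rename_i h
        simp [h]

lemma insertIdx_injective {m : ℕ} {l₁ l₂ : List ℕ} {p q : ℕ}
    (hm1 : m ∉ l₁) (hm2 : m ∉ l₂) (hp : p ≤ l₁.length) (hq : q ≤ l₂.length)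
    (h : l₁.insertIdx p m = l₂.insertIdx q m) : p = q ∧ l₁ = l₂ := by
  have key : ∀ (m : ℕ) (l₁ l₂ : List ℕ) (p q : ℕ), m ∉ l₂ → p ≤ l₁.length → q ≤ l₂.length →
      l₁.insertIdx p m = l₂.insertIdx q m → p < q → False := by
    intro m l₁ l₂ p q hm2 hp hq h hlt
    have hpl2 : p < l₂.length := lt_of_lt_of_le hlt hq
    have e1 : (l₁.insertIdx p m)[p]? = some m := by
      rw [List.getElem?_eq_getElem (by rw [List.length_insertIdx_of_le_length hp]; omega)]
      exact congrArg some (List.getElem_insertIdx_self _)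
    have e2 : (l₂.insertIdx q m)[p]? = some (l₂[p]'hpl2) := by
      rw [List.getElem?_eq_getElem (by rw [List.length_insertIdx_of_le_length hq]; omega)]
      exact congrArg some (List.getElem_insertIdx_of_lt hlt _)
    rw [h] at e1
    have e3 : l₂[p]'hpl2 = m := Option.some.inj (e2.symm.trans e1)
    exact hm2 (e3 ▸ List.getElem_mem hpl2)
  have hpq : p = q := by
    rcases lt_trichotomy p q with hlt | heq | hgt
    · exact absurd (key m l₁ l₂ p q hm2 hp hq h hlt) (by simp)
    · exact heq
    · exact absurd (key m l₂ l₁ q p hm1 hq hp h.symm hgt) (by simp)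
  subst hpq
  refine ⟨rfl, ?_⟩
  have := congrArg (List.eraseIdx · p) h
  simpa [List.eraseIdx_insertIdx_self] using this

lemma exists_insertIdx (m : ℕ) : ∀ l : List ℕ, m ∈ l →
    ∃ p ≤ (l.erase m).length, l = (l.erase m).insertIdx p m := by
  intro l
  induction l with
  | nil => simp
  | cons a t ih =>
      intro hm
      by_cases ha : a = m
      · subst ha
        exact ⟨0, Nat.zero_le _, by simp [List.erase_cons_head]⟩
      · have hmt : m ∈ t := by
          rcases List.mem_cons.mp hm with h | h
          · exact absurd h.symm ha
          · exact h
        obtain ⟨p, hp, hl⟩ := ih hmt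
        have he : (a :: t).erase m = a :: t.erase m := by
          rw [List.erase_cons_tail]
          simp [ha]
        refine ⟨p + 1, by simp [he]; omega, ?_⟩
        rw [he]
        show a :: t = (a :: t.erase m).insertIdx (p+1) m
        rw [List.insertIdx_succ_cons]
        rw [← hl]


def permsList (S : Finset ℕ) : Finset (List ℕ) := (S.sort (· ≤ ·)).permutations.toFinset

lemma mem_permsList {S : Finset ℕ} {l : List ℕ} :
    l ∈ permsList S ↔ l.Nodup ∧ l.toFinset = S := by
  rw [permsList, List.mem_toFinset, List.mem_permutations]
  constructor
  · intro h
    refine ⟨h.nodup_iff.mpr (S.sort_nodup _), ?_⟩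
    rw [List.toFinset_eq_of_perm _ _ h, Finset.sort_toFinset]
  · rintro ⟨h1, h2⟩
    exact List.perm_of_nodup_nodup_toFinset_eq h1 (S.sort_nodup _)
      (by rw [h2, Finset.sort_toFinset])

def cnt (T S : Finset ℕ) : ℕ := ((permsList S).filter fun l => dtl l ⊆ T).card

lemma cnt_empty (T : Finset ℕ) : cnt T ∅ = 1 := by
  have : permsList ∅ = {([] : List ℕ)} := by
    ext l
    rw [mem_permsList]
    constructor
    · rintro ⟨-, h2⟩
      simpa using List.toFinset_eq_empty_iff l |>.mp (by simpa using h2)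
    · intro h
      rw [Finset.mem_singleton] at h
      subst h
      exact ⟨List.nodup_nil, by simp⟩
  rw [cnt, this]
  rw [Finset.filter_singleton]
  simp [dtl]

lemma slot_card (T : Finset ℕ) (l' : List ℕ) (hn : l'.Nodup) :
    ((Finset.range (l'.length + 1)).filter fun p => p = 0 ∨ l'.getD (p-1) 0 ∈ T).card
      = 1 + (l'.toFinset ∩ T).card := by
  classical
  have h1 : (Finset.range (l'.length + 1)).filter (fun p => p = 0 ∨ l'.getD (p-1) 0 ∈ T)
      = insert 0 (((Finset.range l'.length).filter fun i => l'.getD i 0 ∈ T).image (· + 1)) := by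
    ext p
    simp only [Finset.mem_filter, Finset.mem_range, Finset.mem_insert, Finset.mem_image]
    constructor
    · rintro ⟨hlt, (rfl | hT)⟩
      · exact Or.inl rfl
      · match p with
        | 0 => exact Or.inl rfl
        | (i+1) => exact Or.inr ⟨i, ⟨by omega, by simpa using hT⟩, rfl⟩
    · rintro (rfl | ⟨i, ⟨hi, hT⟩, rfl⟩)
      · exact ⟨by omega, Or.inl rfl⟩
      · exact ⟨by omega, Or.inr (by simpa using hT)⟩
  rw [h1, Finset.card_insert_of_notMem (by simp),
    Finset.card_image_of_injective _ (add_left_injective 1), Nat.add_comm]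
  congr 1
  refine Finset.card_bij (fun i _ => l'.getD i 0) ?_ ?_ ?_
  · intro i hi
    simp only [Finset.mem_filter, Finset.mem_range] at hi
    rw [Finset.mem_inter, List.mem_toFinset]
    refine ⟨?_, hi.2⟩
    rw [List.getD_eq_getElem _ _ hi.1]
    exact List.getElem_mem hi.1
  · intro i hi j hj hij
    simp only [Finset.mem_filter, Finset.mem_range] at hi hj
    rw [List.getD_eq_getElem _ _ hi.1, List.getD_eq_getElem _ _ hj.1] at hij
    have := List.nodup_iff_injective_getElem.mp hn
      (a₁ := ⟨i, hi.1⟩) (a₂ := ⟨j, hj.1⟩) hij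
    exact congrArg Fin.val this
  · intro a ha
    rw [Finset.mem_inter, List.mem_toFinset] at ha
    obtain ⟨i, hlen, heq⟩ := List.mem_iff_getElem.mp ha.1
    refine ⟨i, ?_, ?_⟩
    · simp only [Finset.mem_filter, Finset.mem_range]
      refine ⟨hlen, ?_⟩
      rw [List.getD_eq_getElem _ _ hlen, heq]
      exact ha.2
    · rw [List.getD_eq_getElem _ _ hlen, heq]

lemma cnt_erase_min (T S : Finset ℕ) (hS : S.Nonempty) :
    cnt T S = (1 + ((S.erase (S.min' hS)) ∩ T).card) * cnt T (S.erase (S.min' hS)) := by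
  classical
  set m := S.min' hS with hm
  set S' := S.erase m with hS'def
  have hmS : m ∈ S := S.min'_mem hS
  have hmS' : m ∉ S' := Finset.notMem_erase _ _
  have hgt : ∀ a ∈ S', m < a := fun a ha =>
    lt_of_le_of_ne (S.min'_le a (Finset.mem_of_mem_erase ha)) (Ne.symm (Finset.ne_of_mem_erase ha))
  set A := (permsList S).filter (fun l => dtl l ⊆ T) with hA
  set A' := (permsList S').filter (fun l => dtl l ⊆ T) with hA'
  set B := A'.sigma (fun l' => (Finset.range (l'.length + 1)).filter
      fun p => p = 0 ∨ l'.getD (p-1) 0 ∈ T) with hB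
  have memA' : ∀ {l' : List ℕ}, l' ∈ A' →
      l'.Nodup ∧ l'.toFinset = S' ∧ dtl l' ⊆ T := by
    intro l' h
    rw [hA', Finset.mem_filter, mem_permsList] at h
    exact ⟨h.1.1, h.1.2, h.2⟩
  have hcard : A.card = B.card := by
    refine (Finset.card_bij (fun x _ => x.1.insertIdx x.2 m) ?_ ?_ ?_).symm
    · -- maps into A
      rintro ⟨l', p⟩ hx
      simp only [hB, Finset.mem_sigma, Finset.mem_filter, Finset.mem_range] at hx
      obtain ⟨hl', hplt, hslotc⟩ := hx
      obtain ⟨hnd, htf, hdt⟩ := memA' hl'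
      have hplen : p ≤ l'.length := by omega
      have hml' : m ∉ l' := fun h => hmS' (htf ▸ List.mem_toFinset.mpr h)
      have helt : ∀ a ∈ l', m < a := fun a ha => hgt a (htf ▸ List.mem_toFinset.mpr ha)
      have hperm : List.Perm (l'.insertIdx p m) (m :: l') := List.perm_insertIdx m l' hplen
      rw [hA, Finset.mem_filter, mem_permsList]
      refine ⟨⟨?_, ?_⟩, ?_⟩
      · exact hperm.nodup_iff.mpr (List.nodup_cons.mpr ⟨hml', hnd⟩)
      · rw [List.toFinset_eq_of_perm _ _ hperm]
        simp only [List.toFinset_cons, htf]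
        rw [hS'def, Finset.insert_erase hmS]
      · dsimp only
        rw [dtl_insertIdx m l' p helt hplen]
        rcases hslotc with rfl | hT
        · simpa using hdt
        · rcases Nat.eq_zero_or_pos p with rfl | hpos
          · simpa using hdt
          · rw [if_neg (by omega)]
            exact Finset.insert_subset hT hdt
    · -- injective
      rintro ⟨l₁, p⟩ hx ⟨l₂, q⟩ hy hxy
      dsimp only at hxy
      simp only [hB, Finset.mem_sigma, Finset.mem_filter, Finset.mem_range] at hx hy
      obtain ⟨hl₁, hp, -⟩ := hx
      obtain ⟨hl₂, hq, -⟩ := hy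
      obtain ⟨hnd₁, htf₁, -⟩ := memA' hl₁
      obtain ⟨hnd₂, htf₂, -⟩ := memA' hl₂
      have hm₁ : m ∉ l₁ := fun h => hmS' (htf₁ ▸ List.mem_toFinset.mpr h)
      have hm₂ : m ∉ l₂ := fun h => hmS' (htf₂ ▸ List.mem_toFinset.mpr h)
      obtain ⟨hpq, hll⟩ := insertIdx_injective hm₁ hm₂ (by omega) (by omega) hxy
      subst hpq; subst hll; rfl
    · -- surjective
      intro l hl
      rw [hA, Finset.mem_filter, mem_permsList] at hl
      obtain ⟨⟨hnd, htf⟩, hdt⟩ := hl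
      have hml : m ∈ l := List.mem_toFinset.mp (htf ▸ hmS)
      obtain ⟨p, hp, hrepr⟩ := exists_insertIdx m l hml
      set l' := l.erase m with hl'def
      have hnd' : l'.Nodup := hnd.erase m
      have htf' : l'.toFinset = S' := by
        ext a
        rw [List.mem_toFinset, hl'def, hnd.mem_erase_iff, hS'def, Finset.mem_erase,
          ← htf, List.mem_toFinset]
      have hml' : m ∉ l' := fun h => (hnd.mem_erase_iff.mp h).1 rfl
      have helt : ∀ a ∈ l', m < a := fun a ha => hgt a (htf' ▸ List.mem_toFinset.mpr ha)
      have hdtl : dtl l = if p = 0 then dtl l' else insert (l'.getD (p-1) 0) (dtl l') := by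
        conv_lhs => rw [hrepr]
        exact dtl_insertIdx m l' p helt hp
      have hdt' : dtl l' ⊆ T := by
        rcases Nat.eq_zero_or_pos p with rfl | hpos
        · simpa [hdtl] using hdt
        · rw [hdtl, if_neg (by omega)] at hdt
          exact (Finset.subset_insert _ _).trans hdt
      have hslot : p = 0 ∨ l'.getD (p-1) 0 ∈ T := by
        rcases Nat.eq_zero_or_pos p with rfl | hpos
        · exact Or.inl rfl
        · rw [hdtl, if_neg (by omega)] at hdt
          exact Or.inr (hdt (Finset.mem_insert_self _ _))
      refine ⟨⟨l', p⟩, ?_, hrepr.symm⟩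
      simp only [hB, Finset.mem_sigma, Finset.mem_filter, Finset.mem_range]
      refine ⟨?_, by omega, hslot⟩
      rw [hA', Finset.mem_filter, mem_permsList]
      exact ⟨⟨hnd', htf'⟩, hdt'⟩
  have hBcard : B.card = (1 + (S' ∩ T).card) * A'.card := by
    rw [hB, Finset.card_sigma]
    rw [Finset.sum_congr rfl (fun l' hl' => ?_), Finset.sum_const, smul_eq_mul, Nat.mul_comm]
    obtain ⟨hnd, htf, -⟩ := memA' hl'
    rw [slot_card T l' hnd, htf]
  show A.card = (1 + (S' ∩ T).card) * A'.card
  rw [hcard, hBcard]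


lemma cnt_eq_prod (T : Finset ℕ) (S : Finset ℕ) :
    cnt T S = ∏ v ∈ S, (1 + ((S ∩ T).filter fun w => v < w).card) := by
  classical
  induction S using Finset.strongInduction with
  | _ S ih =>
    rcases S.eq_empty_or_nonempty with rfl | hS
    · simp [cnt_empty]
    · set m := S.min' hS with hm
      have hmS : m ∈ S := S.min'_mem hS
      rw [cnt_erase_min T S hS, ih _ (Finset.erase_ssubset hmS)]
      rw [← Finset.mul_prod_erase S _ hmS]
      have e1 : (S.erase m) ∩ T = (S ∩ T).filter (fun w => m < w) := by
        ext w
        simp only [Finset.mem_inter, Finset.mem_erase, Finset.mem_filter]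
        constructor
        · rintro ⟨⟨hne, hwS⟩, hwT⟩
          exact ⟨⟨hwS, hwT⟩, lt_of_le_of_ne (S.min'_le w hwS) (Ne.symm hne)⟩
        · rintro ⟨⟨hwS, hwT⟩, hlt⟩
          exact ⟨⟨by omega, hwS⟩, hwT⟩
      rw [e1]
      congr 1
      refine Finset.prod_congr rfl fun v hv => ?_
      have hvm : m < v := lt_of_le_of_ne (S.min'_le v (Finset.mem_of_mem_erase hv))
        (Ne.symm (Finset.ne_of_mem_erase hv))
      have e2 : ((S ∩ T).filter (fun w => m < w)).filter (fun w => v < w)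
          = (S ∩ T).filter (fun w => v < w) := by
        ext w
        simp only [Finset.mem_filter]
        constructor
        · rintro ⟨⟨h1, h2⟩, h3⟩
          exact ⟨h1, h3⟩
        · rintro ⟨h1, h3⟩
          exact ⟨⟨h1, by omega⟩, h3⟩
      rw [e2]

lemma cnt_range (n : ℕ) (T : Finset ℕ) (hT : T ⊆ Finset.range (n+1)) :
    cnt T (Finset.range (n+1)) = ∏ v ∈ Finset.range (n+1), (1 + (T.filter fun w => v < w).card) := by
  rw [cnt_eq_prod, Finset.inter_eq_right.mpr hT]

lemma cnt_range_zero (n : ℕ) : cnt ∅ (Finset.range (n+1)) = 1 := by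
  rw [cnt_range n ∅ (by simp)]
  simp

lemma cnt_range_one (n a : ℕ) (ha : a < n + 1) :
    cnt {a} (Finset.range (n+1)) = 2 ^ a := by
  rw [cnt_range n {a} (by simpa using ha)]
  have h1 : ∀ v, (1 + (({a} : Finset ℕ).filter fun w => v < w).card) = if v < a then 2 else 1 := by
    intro v
    rw [Finset.filter_singleton]
    split <;> simp
  rw [Finset.prod_congr rfl fun v _ => h1 v, ← Finset.prod_filter]
  rw [Finset.prod_const]
  congr 1
  have : (Finset.range (n+1)).filter (fun v => v < a) = Finset.range a := by
    ext v; simp only [Finset.mem_filter, Finset.mem_range]; omega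
  rw [this, Finset.card_range]

lemma cnt_range_two (n a b : ℕ) (hab : a < b) (hb : b < n + 1) :
    cnt {a, b} (Finset.range (n+1)) = 3 ^ a * 2 ^ (b - a) := by
  rw [cnt_range n {a, b} (by intro w hw; simp at hw ⊢; omega)]
  have h1 : ∀ v, (1 + (({a, b} : Finset ℕ).filter fun w => v < w).card)
      = (if v < a then 3 else 1) * (if ¬ v < a ∧ v < b then 2 else 1) := by
    intro v
    have : ({a, b} : Finset ℕ).filter (fun w => v < w)
        = (if v < a then {a} else ∅) ∪ (if v < b then {b} else ∅) := by
      ext w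
      simp only [Finset.mem_filter, Finset.mem_insert, Finset.mem_singleton, Finset.mem_union]
      split <;> split <;> simp <;> omega
    rw [this]
    by_cases hva : v < a
    · have hvb : v < b := by omega
      simp only [if_pos hva, if_pos hvb, hva, hvb, not_true, false_and, if_neg]
      rw [Finset.card_union_of_disjoint (by simp; omega)]
      simp
    · by_cases hvb : v < b
      · simp [hva, hvb]
      · simp [hva, hvb]
  rw [Finset.prod_congr rfl fun v _ => h1 v, Finset.prod_mul_distrib]
  congr 1
  · rw [← Finset.prod_filter, Finset.prod_const]
    congr 1
    have : (Finset.range (n+1)).filter (fun v => v < a) = Finset.range a := by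
      ext v; simp only [Finset.mem_filter, Finset.mem_range]; omega
    rw [this, Finset.card_range]
  · rw [← Finset.prod_filter, Finset.prod_const]
    congr 1
    have : (Finset.range (n+1)).filter (fun v => ¬ v < a ∧ v < b) = Finset.Ico a b := by
      ext v; simp only [Finset.mem_filter, Finset.mem_range, Finset.mem_Ico]; omega
    rw [this, Nat.card_Ico]


variable {n : ℕ}

def listOf (n : ℕ) (σ : Equiv.Perm (Fin (n+1))) : List ℕ := List.ofFn (fun i => (σ i : ℕ))

lemma length_listOf (σ : Equiv.Perm (Fin (n+1))) : (listOf n σ).length = n + 1 := by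
  simp [listOf]

lemma getD_listOf (σ : Equiv.Perm (Fin (n+1))) (i : ℕ) (hi : i < n + 1) :
    (listOf n σ).getD i 0 = σ ⟨i, hi⟩ := by
  rw [List.getD_eq_getElem _ _ (by rw [length_listOf]; exact hi)]
  simp only [listOf, List.getElem_ofFn]

lemma nodup_listOf (σ : Equiv.Perm (Fin (n+1))) : (listOf n σ).Nodup := by
  rw [listOf, List.nodup_ofFn]
  exact fun i j h => σ.injective (Fin.val_injective h)

lemma toFinset_listOf (σ : Equiv.Perm (Fin (n+1))) :
    (listOf n σ).toFinset = Finset.range (n+1) := by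
  ext v
  rw [List.mem_toFinset, Finset.mem_range, listOf, List.mem_ofFn]
  constructor
  · rintro ⟨i, rfl⟩
    exact (σ i).isLt
  · intro hv
    exact ⟨σ.symm ⟨v, hv⟩, by simp⟩

lemma dtl_listOf (σ : Equiv.Perm (Fin (n+1))) :
    dtl (listOf n σ) = (descentTops n σ).image Fin.val := by
  ext v
  rw [mem_dtl]
  simp only [descentTops, Finset.mem_image, Finset.mem_filter, Finset.mem_univ, true_and]
  constructor
  · rintro ⟨i, h1, h2, h3⟩
    rw [length_listOf] at h1
    have hi : i < n := by omega
    have m1 : (⟨i+1, by omega⟩ : Fin (n+1)) = Fin.succ ⟨i, hi⟩ := by ext; simp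
    have m2 : (⟨i, by omega⟩ : Fin (n+1)) = Fin.castSucc ⟨i, hi⟩ := by ext; simp
    have e1 : (listOf n σ).getD (i+1) 0 = ((σ (Fin.succ ⟨i, hi⟩)) : ℕ) := by
      rw [getD_listOf σ (i+1) (by omega), m1]
    have e2 : (listOf n σ).getD i 0 = ((σ (Fin.castSucc ⟨i, hi⟩)) : ℕ) := by
      rw [getD_listOf σ i (by omega), m2]
    rw [e1, e2] at h2
    rw [e2] at h3
    exact ⟨σ (Fin.castSucc ⟨i, hi⟩), ⟨⟨i, hi⟩, by rw [Fin.lt_def]; exact h2, rfl⟩, h3⟩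
  · rintro ⟨w, ⟨i, hlt, rfl⟩, rfl⟩
    have m1 : (⟨(i:ℕ)+1, by omega⟩ : Fin (n+1)) = Fin.succ i := by ext; simp
    have m2 : (⟨(i:ℕ), by omega⟩ : Fin (n+1)) = Fin.castSucc i := by ext; simp
    have e1 : (listOf n σ).getD ((i:ℕ)+1) 0 = ((σ (Fin.succ i)) : ℕ) := by
      rw [getD_listOf σ ((i:ℕ)+1) (by omega), m1]
    have e2 : (listOf n σ).getD (i:ℕ) 0 = ((σ (Fin.castSucc i)) : ℕ) := by
      rw [getD_listOf σ (i:ℕ) (by omega), m2]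
    refine ⟨(i : ℕ), by rw [length_listOf]; omega, ?_, ?_⟩
    · rw [e1, e2]
      exact hlt
    · rw [e2]

lemma card_transfer (P : List ℕ → Prop) [DecidablePred P] :
    (Finset.univ.filter fun σ : Equiv.Perm (Fin (n+1)) => P (listOf n σ)).card
      = ((permsList (Finset.range (n+1))).filter fun l => P l).card := by
  refine Finset.card_bij (fun σ _ => listOf n σ) ?_ ?_ ?_
  · intro σ hσ
    rw [Finset.mem_filter] at hσ ⊢
    exact ⟨mem_permsList.mpr ⟨nodup_listOf σ, toFinset_listOf σ⟩, hσ.2⟩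
  · intro σ hσ τ hτ h
    ext i
    have := congrArg (fun l => l.getD (i : ℕ) 0) h
    rw [getD_listOf σ i i.isLt, getD_listOf τ i i.isLt] at this
    exact this
  · intro l hl
    rw [Finset.mem_filter, mem_permsList] at hl
    obtain ⟨⟨hnd, htf⟩, hP⟩ := hl
    have hlen : l.length = n + 1 := by
      rw [← List.toFinset_card_of_nodup hnd, htf, Finset.card_range]
    have hmem : ∀ i : Fin (n+1), l.getD (i : ℕ) 0 < n + 1 := by
      intro i
      have : l.getD (i : ℕ) 0 ∈ l := by
        rw [List.getD_eq_getElem _ _ (by omega)]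
        exact List.getElem_mem (by omega)
      rw [← Finset.mem_range, ← htf, List.mem_toFinset]
      exact this
    set f : Fin (n+1) → Fin (n+1) := fun i => ⟨l.getD (i : ℕ) 0, hmem i⟩ with hf
    have hinj : Function.Injective f := by
      intro i j h
      have h' : l.getD (i : ℕ) 0 = l.getD (j : ℕ) 0 := congrArg Fin.val h
      have hi' : (i : ℕ) < l.length := by omega
      have hj' : (j : ℕ) < l.length := by omega
      rw [List.getD_eq_getElem _ _ hi'] at h'
      rw [List.getD_eq_getElem _ _ hj'] at h'
      have heq := List.nodup_iff_injective_getElem.mp hnd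
        (a₁ := ⟨(i : ℕ), hi'⟩) (a₂ := ⟨(j : ℕ), hj'⟩) h'
      have hval : (i : ℕ) = (j : ℕ) := by injection heq
      exact Fin.ext hval
    have hbij : Function.Bijective f := (Finite.injective_iff_bijective).mp hinj
    refine ⟨Equiv.ofBijective f hbij, ?_, ?_⟩
    · rw [Finset.mem_filter]
      refine ⟨Finset.mem_univ _, ?_⟩
      have : listOf n (Equiv.ofBijective f hbij) = l := by
        refine List.ext_getElem (by rw [length_listOf, hlen]) ?_
        intro i h1 h2
        rw [length_listOf] at h1
        have : (listOf n (Equiv.ofBijective f hbij)).getD i 0 = l.getD i 0 := by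
          rw [getD_listOf _ i h1]
          show (f ⟨i, h1⟩ : ℕ) = _
          rfl
        rw [List.getD_eq_getElem _ _ (by rw [length_listOf]; exact h1),
          List.getD_eq_getElem _ _ (by omega)] at this
        exact this
      rw [this]
      exact hP
    · refine List.ext_getElem (by rw [length_listOf, hlen]) ?_
      intro i h1 h2
      rw [length_listOf] at h1
      have e : (listOf n (Equiv.ofBijective f hbij)).getD i 0 = l.getD i 0 := by
        rw [getD_listOf _ i h1]
        show (f ⟨i, h1⟩ : ℕ) = _
        rfl
      rw [List.getD_eq_getElem _ _ (by rw [length_listOf]; exact h1),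
        List.getD_eq_getElem _ _ (by omega)] at e
      exact e

lemma card_DT_subset (T : Finset (Fin (n+1))) :
    (Finset.univ.filter fun σ : Equiv.Perm (Fin (n+1)) => descentTops n σ ⊆ T).card
      = cnt (T.image Fin.val) (Finset.range (n+1)) := by
  have hiff : ∀ σ : Equiv.Perm (Fin (n+1)),
      (descentTops n σ ⊆ T) ↔ (dtl (listOf n σ) ⊆ T.image Fin.val) := by
    intro σ
    rw [dtl_listOf]
    exact (Finset.image_subset_image_iff Fin.val_injective).symm
  rw [Finset.filter_congr (fun σ _ => hiff σ),
    card_transfer (fun l => dtl l ⊆ T.image Fin.val), cnt]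

lemma subset_pair {α : Type*} [DecidableEq α] {s : Finset α} {a b : α} :
    s ⊆ {a, b} ↔ s = ∅ ∨ s = {a} ∨ s = {b} ∨ s = {a, b} := by
  constructor
  · intro h
    by_cases ha : a ∈ s <;> by_cases hb : b ∈ s
    · refine Or.inr (Or.inr (Or.inr (Finset.Subset.antisymm h ?_)))
      exact Finset.insert_subset ha (Finset.singleton_subset_iff.mpr hb)
    · refine Or.inr (Or.inl (Finset.Subset.antisymm ?_ (Finset.singleton_subset_iff.mpr ha)))
      intro t ht
      rcases Finset.mem_insert.mp (h ht) with rfl | h'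
      · exact Finset.mem_singleton_self _
      · rw [Finset.mem_singleton] at h'
        exact absurd (h' ▸ ht) hb
    · refine Or.inr (Or.inr (Or.inl (Finset.Subset.antisymm ?_ (Finset.singleton_subset_iff.mpr hb))))
      intro t ht
      rcases Finset.mem_insert.mp (h ht) with rfl | h'
      · exact absurd ht ha
      · exact h'
    · refine Or.inl (Finset.eq_empty_of_forall_notMem fun t ht => ?_)
      rcases Finset.mem_insert.mp (h ht) with rfl | h'
      · exact ha ht
      · rw [Finset.mem_singleton] at h'
        exact hb (h' ▸ ht)
  · rintro (rfl | rfl | rfl | rfl)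
    · exact Finset.empty_subset _
    · exact Finset.singleton_subset_iff.mpr (Finset.mem_insert_self _ _)
    · exact Finset.singleton_subset_iff.mpr (Finset.mem_insert_of_mem (Finset.mem_singleton_self _))
    · exact Finset.Subset.refl _

lemma card_DT_empty : (Finset.univ.filter fun σ : Equiv.Perm (Fin (n+1)) =>
    descentTops n σ = ∅).card = 1 := by
  have h := card_DT_subset (∅ : Finset (Fin (n+1)))
  rw [Finset.filter_congr (fun σ _ => by rw [Finset.subset_empty])] at h
  rw [h, Finset.image_empty, cnt_range_zero]

lemma card_DT_singleton (x : Fin (n+1)) :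
    1 + (Finset.univ.filter fun σ : Equiv.Perm (Fin (n+1)) =>
      descentTops n σ = {x}).card = 2 ^ (x : ℕ) := by
  have h := card_DT_subset ({x} : Finset (Fin (n+1)))
  rw [Finset.filter_congr (fun σ _ => Finset.subset_singleton_iff)] at h
  rw [Finset.filter_or, Finset.card_union_of_disjoint] at h
  · rw [card_DT_empty, Finset.image_singleton, cnt_range_one n (x:ℕ) x.isLt] at h
    exact h
  · rw [Finset.disjoint_left]
    intro σ h1 h2
    rw [Finset.mem_filter] at h1 h2
    exact (Finset.singleton_ne_empty x) (by rw [← h2.2, h1.2])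

lemma card_DT_pair (x y : Fin (n+1)) (hxy : x < y) :
    1 + (Finset.univ.filter fun σ : Equiv.Perm (Fin (n+1)) =>
        descentTops n σ = {x}).card
      + (Finset.univ.filter fun σ : Equiv.Perm (Fin (n+1)) =>
        descentTops n σ = {y}).card
      + (Finset.univ.filter fun σ : Equiv.Perm (Fin (n+1)) =>
        descentTops n σ = {x, y}).card
      = 3 ^ (x : ℕ) * 2 ^ ((y : ℕ) - (x : ℕ)) := by
  classical
  have hne : x ≠ y := ne_of_lt hxy
  have h := card_DT_subset ({x, y} : Finset (Fin (n+1)))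
  rw [Finset.filter_congr (fun σ _ => subset_pair)] at h
  have hdisj : ∀ s t : Finset (Fin (n+1)), s ≠ t →
      Disjoint (Finset.univ.filter fun σ : Equiv.Perm (Fin (n+1)) => descentTops n σ = s)
        (Finset.univ.filter fun σ : Equiv.Perm (Fin (n+1)) => descentTops n σ = t) := by
    intro s t hst
    rw [Finset.disjoint_left]
    intro σ h1 h2
    rw [Finset.mem_filter] at h1 h2
    exact hst (by rw [← h1.2, ← h2.2])
  have d1 : (∅ : Finset (Fin (n+1))) ≠ {x} := (Finset.singleton_ne_empty x).symm
  have d2 : (∅ : Finset (Fin (n+1))) ≠ {y} := (Finset.singleton_ne_empty y).symm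
  have d3 : (∅ : Finset (Fin (n+1))) ≠ {x, y} := (Finset.insert_ne_empty x {y}).symm
  have d4 : ({x} : Finset (Fin (n+1))) ≠ {y} := by
    intro h'
    exact hne (Finset.singleton_injective h')
  have d5 : ({x} : Finset (Fin (n+1))) ≠ {x, y} := by
    intro h'
    have : y ∈ ({x} : Finset (Fin (n+1))) := h' ▸ Finset.mem_insert_of_mem (Finset.mem_singleton_self y)
    exact hne ((Finset.mem_singleton.mp this).symm)
  have d6 : ({y} : Finset (Fin (n+1))) ≠ {x, y} := by
    intro h'
    have : x ∈ ({y} : Finset (Fin (n+1))) := h' ▸ Finset.mem_insert_self x {y}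
    exact hne (Finset.mem_singleton.mp this)
  have hD3 : Disjoint
      (Finset.univ.filter fun σ : Equiv.Perm (Fin (n+1)) => descentTops n σ = {y})
      (Finset.univ.filter fun σ : Equiv.Perm (Fin (n+1)) => descentTops n σ = {x, y}) :=
    hdisj _ _ d6
  have hD2 : Disjoint
      (Finset.univ.filter fun σ : Equiv.Perm (Fin (n+1)) => descentTops n σ = {x})
      ((Finset.univ.filter fun σ : Equiv.Perm (Fin (n+1)) => descentTops n σ = {y})
        ∪ (Finset.univ.filter fun σ : Equiv.Perm (Fin (n+1)) => descentTops n σ = {x, y})) := by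
    rw [Finset.disjoint_union_right]
    exact ⟨hdisj _ _ d4, hdisj _ _ d5⟩
  have hD1 : Disjoint
      (Finset.univ.filter fun σ : Equiv.Perm (Fin (n+1)) => descentTops n σ = ∅)
      ((Finset.univ.filter fun σ : Equiv.Perm (Fin (n+1)) => descentTops n σ = {x})
        ∪ ((Finset.univ.filter fun σ : Equiv.Perm (Fin (n+1)) => descentTops n σ = {y})
          ∪ (Finset.univ.filter fun σ : Equiv.Perm (Fin (n+1)) => descentTops n σ = {x, y}))) := by
    rw [Finset.disjoint_union_right, Finset.disjoint_union_right]
    exact ⟨hdisj _ _ d1, hdisj _ _ d2, hdisj _ _ d3⟩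
  rw [Finset.filter_or, Finset.filter_or, Finset.filter_or,
    Finset.card_union_of_disjoint hD1, Finset.card_union_of_disjoint hD2,
    Finset.card_union_of_disjoint hD3, card_DT_empty] at h
  rw [show (({x, y} : Finset (Fin (n+1))).image Fin.val) = {(x:ℕ), (y:ℕ)} by
    rw [Finset.image_insert, Finset.image_singleton]] at h
  rw [cnt_range_two n (x:ℕ) (y:ℕ) hxy y.isLt] at h
  generalize hK : 3 ^ (x:ℕ) * 2 ^ ((y:ℕ) - (x:ℕ)) = K at h ⊢
  omega


end Stmt18aux

/-- Let `n ≥ 1`. For any `x₁ ∈ {1,...,n+1}` (where `x : Fin (n+1)` represents the value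
`x + 1`), the number of `σ ∈ S_{n+1}` with `DT(σ) = {x₁}` equals `2^{x₁−1} − 1`; for any
`x₁ < x₂` the number of `σ ∈ S_{n+1}` with `DT(σ) = {x₁,x₂}` equals
`3^{x₁−1}·2^{x₂−x₁} − (2^{x₁−1} + 2^{x₂−1}) + 1`. -/
theorem stmt18 (n : ℕ) (hn : 1 ≤ n) :
    (∀ x : Fin (n + 1),
      ((Finset.univ.filter fun σ : Equiv.Perm (Fin (n + 1)) =>
          descentTops n σ = {x}).card : ℤ) = 2 ^ (((x : ℕ) + 1) - 1) - 1) ∧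
    (∀ x y : Fin (n + 1), x < y →
      ((Finset.univ.filter fun σ : Equiv.Perm (Fin (n + 1)) =>
          descentTops n σ = {x, y}).card : ℤ) =
        3 ^ (((x : ℕ) + 1) - 1) * 2 ^ (((y : ℕ) + 1) - ((x : ℕ) + 1)) -
          (2 ^ (((x : ℕ) + 1) - 1) + 2 ^ (((y : ℕ) + 1) - 1)) + 1) := by
  constructor
  · intro x
    have h := Stmt18aux.card_DT_singleton (n := n) x
    have e1 : ((x : ℕ) + 1) - 1 = (x : ℕ) := by omega
    rw [e1]
    have hc := congrArg (Nat.cast (R := ℤ)) h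
    push_cast at hc
    linarith
  · intro x y hxy
    have h := Stmt18aux.card_DT_pair x y hxy
    have h1 := Stmt18aux.card_DT_singleton (n := n) x
    have h2 := Stmt18aux.card_DT_singleton (n := n) y
    have e1 : ((x : ℕ) + 1) - 1 = (x : ℕ) := by omega
    have e2 : ((y : ℕ) + 1) - 1 = (y : ℕ) := by omega
    have e3 : ((y : ℕ) + 1) - ((x : ℕ) + 1) = (y : ℕ) - (x : ℕ) := by omega
    rw [e1, e2, e3]
    have hc := congrArg (Nat.cast (R := ℤ)) h
    have hc1 := congrArg (Nat.cast (R := ℤ)) h1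
    have hc2 := congrArg (Nat.cast (R := ℤ)) h2
    push_cast at hc hc1 hc2
    linarith
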